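/- arXiv:2008.03600 — 3 statements merged into one kernel-verified Lean document; each statement's English description precedes it below -/
import Mathlib

section
/- Quantile change-of-variables identity: Let ξ be a real random variable with E|ξ|^q < ∞ for some q ≥ 1, let Q be the generalized inverse of the tail function x ↦ Pr(|ξ| ≥ x), and let G be the inverse of the function x ↦ ∫₀^x Q(u) du on [0, ‖ξ‖₁]. Then ∫₀^{‖ξ‖₁} (Q ∘ G(u))^{q−1} du = ∫₀¹ Q(v)^q dv = E|ξ|^q. -/
open MeasureTheory Set Filter Topology
open scoped NNReal ENNReal

noncomputable section

/-- The generalized inverse `Q` of the tail function `x ↦ Pr(|X| ≥ x)`: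
`Q(u) = inf {x ≥ 0 : Pr(|X| ≥ x) ≤ u}`. -/
def tailQuantile {Ω : Type*} [MeasurableSpace Ω] (μ : Measure Ω) (X : Ω → ℝ)
    (u : ℝ) : ℝ :=
  sInf {x : ℝ | 0 ≤ x ∧ (μ {ω | x ≤ |X ω|}).toReal ≤ u}

/-- The primitive `x ↦ ∫₀^x Q(u) du` of the quantile function. -/
def quantilePrimitive {Ω : Type*} [MeasurableSpace Ω] (μ : Measure Ω) (X : Ω → ℝ)
    (x : ℝ) : ℝ :=
  ∫ u in (0 : ℝ)..x, tailQuantile μ X u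

/-- The generalized inverse `G` of `x ↦ ∫₀^x Q(u) du`. -/
def quantilePrimitiveInv {Ω : Type*} [MeasurableSpace Ω] (μ : Measure Ω) (X : Ω → ℝ)
    (y : ℝ) : ℝ :=
  sInf {x : ℝ | 0 ≤ x ∧ y ≤ quantilePrimitive μ X x}

namespace QCV

variable {Ω : Type*} [MeasurableSpace Ω] (μ : Measure Ω) [IsProbabilityMeasure μ]
  (ξ : Ω → ℝ)

lemma Q_nonneg (v : ℝ) : 0 ≤ tailQuantile μ ξ v :=
  Real.sInf_nonneg fun _ hx => hx.1

lemma Q_of_neg {v : ℝ} (hv : v < 0) : tailQuantile μ ξ v = 0 := by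
  have : {x : ℝ | 0 ≤ x ∧ (μ {ω | x ≤ |ξ ω|}).toReal ≤ v} = ∅ := by
    ext x
    simp only [mem_setOf_eq, mem_empty_iff_false, iff_false, not_and]
    intro _
    exact fun h => absurd (h.trans_lt hv) (not_lt.2 ENNReal.toReal_nonneg)
  rw [tailQuantile, this, Real.sInf_empty]

lemma Q_of_one_le {v : ℝ} (hv : 1 ≤ v) : tailQuantile μ ξ v = 0 := by
  refine le_antisymm (csInf_le ⟨0, fun y hy => hy.1⟩ ⟨le_rfl, ?_⟩) (Q_nonneg μ ξ v)
  calc (μ {ω | (0:ℝ) ≤ |ξ ω|}).toReal ≤ (μ univ).toReal :=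
        ENNReal.toReal_mono (measure_ne_top _ _) (measure_mono (subset_univ _))
    _ = 1 := by simp
    _ ≤ v := hv

variable (hmeas : Measurable ξ)

lemma S_nonempty (hmeas : Measurable ξ) {v : ℝ} (hv : 0 < v) :
    {x : ℝ | 0 ≤ x ∧ (μ {ω | x ≤ |ξ ω|}).toReal ≤ v}.Nonempty := by
  have htends : Tendsto (fun n : ℕ => μ {ω | (n:ℝ) ≤ |ξ ω|}) atTop (𝓝 0) := by
    have h1 : Tendsto (μ ∘ fun n : ℕ => {ω | (n:ℝ) ≤ |ξ ω|}) atTop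
        (𝓝 (μ (⋂ n : ℕ, {ω | (n:ℝ) ≤ |ξ ω|}))) := by
      refine tendsto_measure_iInter_atTop (fun n => ?_) (fun n m hnm ω hω => ?_) ⟨0, measure_ne_top _ _⟩
      · exact ((measurableSet_le measurable_const hmeas.abs)).nullMeasurableSet
      · exact le_trans (by exact_mod_cast hnm : (n:ℝ) ≤ (m:ℝ)) hω
    have h2 : (⋂ n : ℕ, {ω | (n:ℝ) ≤ |ξ ω|}) = ∅ := by
      ext ω
      simp only [mem_iInter, mem_setOf_eq, mem_empty_iff_false, iff_false, not_forall, not_le]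
      obtain ⟨n, hn⟩ := exists_nat_gt |ξ ω|
      exact ⟨n, hn⟩
    rw [h2, measure_empty] at h1
    exact h1
  have hev : ∀ᶠ n : ℕ in atTop, μ {ω | (n:ℝ) ≤ |ξ ω|} < ENNReal.ofReal v :=
    htends.eventually_lt_const (ENNReal.ofReal_pos.2 hv)
  obtain ⟨n, hn⟩ := hev.exists
  exact ⟨n, Nat.cast_nonneg n, ENNReal.toReal_le_of_le_ofReal hv.le hn.le⟩

/-- Key: for `v > 0` and `x ≥ 0`, `Q v ≤ x ↔ μ {|ξ| > x}.toReal ≤ v`. -/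
lemma Q_le_iff (hmeas : Measurable ξ) {v x : ℝ} (hv : 0 < v) (hx : 0 ≤ x) :
    tailQuantile μ ξ v ≤ x ↔ (μ {ω | x < |ξ ω|}).toReal ≤ v := by
  constructor
  · intro h
    have hunion : {ω | x < |ξ ω|} = ⋃ n : ℕ, {ω | x + 1/(n+1) ≤ |ξ ω|} := by
      ext ω
      simp only [mem_setOf_eq, mem_iUnion]
      constructor
      · intro hω
        obtain ⟨n, hn⟩ := exists_nat_one_div_lt (sub_pos.2 hω)
        exact ⟨n, by push_cast at hn ⊢; linarith⟩
      · intro ⟨n, hn⟩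
        have : (0:ℝ) < 1/(n+1) := by positivity
        linarith
    have hmono : Monotone fun n : ℕ => {ω | x + 1/((n:ℝ)+1) ≤ |ξ ω|} := by
      intro n m hnm ω hω
      have h1 : (1:ℝ)/((m:ℝ)+1) ≤ 1/((n:ℝ)+1) := by
        apply one_div_le_one_div_of_le (by positivity)
        exact_mod_cast Nat.add_le_add_right hnm 1
      simp only [mem_setOf_eq] at hω ⊢
      linarith
    have hSne := S_nonempty μ ξ hmeas hv
    have hkey : ∀ n : ℕ, μ {ω | x + 1/((n:ℝ)+1) ≤ |ξ ω|} ≤ ENNReal.ofReal v := by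
      intro n
      have hlt : tailQuantile μ ξ v < x + 1/((n:ℝ)+1) :=
        lt_of_le_of_lt h (lt_add_of_pos_right x (by positivity))
      obtain ⟨z, hz, hzlt⟩ := exists_lt_of_csInf_lt hSne hlt
      have hsub : {ω | x + 1/((n:ℝ)+1) ≤ |ξ ω|} ⊆ {ω | z ≤ |ξ ω|} :=
        fun ω hω => le_trans hzlt.le hω
      refine le_trans (measure_mono hsub) ?_
      exact (ENNReal.le_ofReal_iff_toReal_le (measure_ne_top _ _) hv.le).2 hz.2
    have := (hmono.directed_le).measure_iUnion (μ := μ)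
    rw [hunion, this]
    refine ENNReal.toReal_le_of_le_ofReal hv.le (iSup_le hkey)
  · intro h
    refine le_of_forall_pos_le_add fun ε hε => ?_
    refine csInf_le ⟨0, fun y hy => hy.1⟩ ⟨by linarith, ?_⟩
    refine le_trans (ENNReal.toReal_mono (measure_ne_top _ _) (measure_mono ?_)) h
    intro ω hω
    simp only [mem_setOf_eq] at hω ⊢
    linarith

lemma Q_measurable (hmeas : Measurable ξ) : Measurable (tailQuantile μ ξ) := by
  apply measurable_of_Iic
  intro x
  rcases lt_or_ge x 0 with hx | hx
  · have : tailQuantile μ ξ ⁻¹' Iic x = ∅ := by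
      ext v
      simp only [mem_preimage, mem_Iic, mem_empty_iff_false, iff_false, not_le]
      exact lt_of_lt_of_le hx (Q_nonneg μ ξ v)
    rw [this]; exact MeasurableSet.empty
  · by_cases h0 : tailQuantile μ ξ 0 ≤ x
    · have : tailQuantile μ ξ ⁻¹' Iic x
          = Iic 0 ∪ (Ici (μ {ω | x < |ξ ω|}).toReal ∩ Ioi 0) := by
        ext v
        simp only [mem_preimage, mem_Iic, mem_union, mem_inter_iff, mem_Ici, mem_Ioi]
        rcases lt_trichotomy v 0 with hv | hv | hv
        · simp [Q_of_neg μ ξ hv, hx, hv.le]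
        · subst hv; simp [h0]
        · rw [Q_le_iff μ ξ hmeas hv hx]
          simp [hv, not_le.2 hv]
      rw [this]
      exact measurableSet_Iic.union (measurableSet_Ici.inter measurableSet_Ioi)
    · have : tailQuantile μ ξ ⁻¹' Iic x
          = Iio 0 ∪ (Ici (μ {ω | x < |ξ ω|}).toReal ∩ Ioi 0) := by
        ext v
        simp only [mem_preimage, mem_Iic, mem_union, mem_inter_iff, mem_Ici, mem_Ioi]
        rcases lt_trichotomy v 0 with hv | hv | hv
        · simp [Q_of_neg μ ξ hv, hx, hv]
        · subst hv; simp [h0, lt_irrefl]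
        · rw [Q_le_iff μ ξ hmeas hv hx]
          simp [hv, not_lt.2 hv.le]
      rw [this]
      exact measurableSet_Iio.union (measurableSet_Ici.inter measurableSet_Ioi)

/-- The pushforward of Lebesgue measure on `(0,1]` under `Q` is the law of `|ξ|`. -/
lemma map_Q (hmeas : Measurable ξ) :
    (volume.restrict (Ioc (0:ℝ) 1)).map (tailQuantile μ ξ)
      = μ.map (fun ω => |ξ ω|) := by
  have hQm := Q_measurable μ ξ hmeas
  have hfin : IsFiniteMeasure ((volume.restrict (Ioc (0:ℝ) 1)).map (tailQuantile μ ξ)) := by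
    constructor
    rw [Measure.map_apply hQm MeasurableSet.univ, preimage_univ,
      Measure.restrict_apply MeasurableSet.univ, univ_inter, Real.volume_Ioc]
    simp
  haveI := hfin
  refine Measure.ext_of_Iic _ _ fun x => ?_
  rw [Measure.map_apply hQm measurableSet_Iic,
    Measure.map_apply (hmeas.abs) measurableSet_Iic,
    Measure.restrict_apply (hQm measurableSet_Iic)]
  rcases lt_or_ge x 0 with hx | hx
  · have h1 : tailQuantile μ ξ ⁻¹' Iic x ∩ Ioc 0 1 = ∅ := by
      ext v
      simp only [mem_inter_iff, mem_preimage, mem_Iic, mem_Ioc, mem_empty_iff_false, iff_false,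
        not_and]
      intro hQ
      exact absurd (le_trans (Q_nonneg μ ξ v) hQ) (not_le.2 hx)
    have h2 : (fun ω => |ξ ω|) ⁻¹' Iic x = ∅ := by
      ext ω
      simp only [mem_preimage, mem_Iic, mem_empty_iff_false, iff_false, not_le]
      exact lt_of_lt_of_le hx (abs_nonneg _)
    rw [h1, h2, measure_empty, measure_empty]
  · set t := (μ {ω | x < |ξ ω|}).toReal with ht
    have ht0 : 0 ≤ t := ENNReal.toReal_nonneg
    have ht1 : t ≤ 1 := by
      rw [ht]
      calc (μ {ω | x < |ξ ω|}).toReal ≤ (μ univ).toReal :=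
            ENNReal.toReal_mono (measure_ne_top _ _) (measure_mono (subset_univ _))
        _ = 1 := by simp
    have hset : tailQuantile μ ξ ⁻¹' Iic x ∩ Ioc 0 1 = Ici t ∩ Ioc 0 1 := by
      ext v
      simp only [mem_inter_iff, mem_preimage, mem_Iic, mem_Ioc, mem_Ici]
      constructor
      · rintro ⟨hQ, hv0, hv1⟩
        exact ⟨(Q_le_iff μ ξ hmeas hv0 hx).1 hQ, hv0, hv1⟩
      · rintro ⟨htv, hv0, hv1⟩
        exact ⟨(Q_le_iff μ ξ hmeas hv0 hx).2 htv, hv0, hv1⟩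
    have hvol : volume (Ici t ∩ Ioc 0 1) = ENNReal.ofReal (1 - t) := by
      refine le_antisymm ?_ ?_
      · refine le_trans (measure_mono (fun v hv => ?_)) (le_of_eq (Real.volume_Icc))
        exact ⟨hv.1, hv.2.2⟩
      · rw [← Real.volume_Ioc (a := t) (b := 1)]
        refine measure_mono fun v hv => ⟨hv.1.le, lt_of_le_of_lt ht0 hv.1, hv.2⟩
    have hcompl : (fun ω => |ξ ω|) ⁻¹' Iic x = {ω | x < |ξ ω|}ᶜ := by
      ext ω; simp [not_lt]
    rw [hset, hvol, hcompl, measure_compl (measurableSet_lt measurable_const hmeas.abs) (measure_ne_top _ _)]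
    · rw [measure_univ, ← ENNReal.ofReal_toReal (measure_ne_top μ {ω | x < |ξ ω|}), ← ht,
        ← ENNReal.ofReal_one, ← ENNReal.ofReal_sub _ ht0]
  
lemma integral_comp (hmeas : Measurable ξ) {f : ℝ → ℝ} (hf : Measurable f) :
    ∫ v in Ioc (0:ℝ) 1, f (tailQuantile μ ξ v) = ∫ ω, f |ξ ω| ∂μ := by
  rw [← integral_map (Q_measurable μ ξ hmeas).aemeasurable hf.aestronglyMeasurable,
    map_Q μ ξ hmeas, integral_map (hmeas.abs).aemeasurable hf.aestronglyMeasurable]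

lemma abs_integrable {q : ℝ} (hq : 1 ≤ q) (hmeas : Measurable ξ)
    (hint : Integrable (fun ω => |ξ ω| ^ q) μ) :
    Integrable (fun ω => |ξ ω|) μ := by
  have h1 : Integrable (fun ω => 1 + |ξ ω| ^ q) μ := (integrable_const 1).add hint
  refine h1.mono' hmeas.abs.aestronglyMeasurable (ae_of_all _ fun ω => ?_)
  rw [Real.norm_eq_abs, abs_abs]
  rcases le_total (|ξ ω|) 1 with h | h
  · have : (0:ℝ) ≤ |ξ ω| ^ q := Real.rpow_nonneg (abs_nonneg _) q
    linarith
  · have h2 : |ξ ω| = |ξ ω| ^ (1:ℝ) := (Real.rpow_one _).symm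
    have h3 : |ξ ω| ^ (1:ℝ) ≤ |ξ ω| ^ q := Real.rpow_le_rpow_of_exponent_le h hq
    calc |ξ ω| = |ξ ω| ^ (1:ℝ) := h2
      _ ≤ |ξ ω| ^ q := h3
      _ ≤ 1 + |ξ ω| ^ q := le_add_of_nonneg_left zero_le_one

lemma Q_integrableOn (hmeas : Measurable ξ) {q : ℝ} (hq : 1 ≤ q)
    (hint : Integrable (fun ω => |ξ ω| ^ q) μ) :
    IntegrableOn (tailQuantile μ ξ) (Ioc (0:ℝ) 1) volume := by
  have h1 : Integrable (id : ℝ → ℝ) (μ.map (fun ω => |ξ ω|)) := by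
    rw [integrable_map_measure aestronglyMeasurable_id (hmeas.abs).aemeasurable]
    exact abs_integrable μ ξ hq hmeas hint
  rw [← map_Q μ ξ hmeas] at h1
  rw [integrable_map_measure aestronglyMeasurable_id
    (Q_measurable μ ξ hmeas).aemeasurable] at h1
  exact h1

lemma Q_integrable (hmeas : Measurable ξ) {q : ℝ} (hq : 1 ≤ q)
    (hint : Integrable (fun ω => |ξ ω| ^ q) μ) :
    Integrable (tailQuantile μ ξ) volume := by
  have hne : ∀ᵐ v : ℝ ∂volume, v ≠ 0 := by
    refine (ae_iff).2 ?_
    simpa using Real.volume_singleton (x := 0)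
  have hzero : (fun v => tailQuantile μ ξ v) =ᵐ[volume.restrict (Ioc (0:ℝ) 1)ᶜ] 0 := by
    rw [EventuallyEq, ae_restrict_iff' (measurableSet_Ioc.compl)]
    filter_upwards [hne] with v hv hvmem
    simp only [mem_compl_iff, mem_Ioc, not_and, not_le] at hvmem
    rcases lt_trichotomy v 0 with h | h | h
    · exact Q_of_neg μ ξ h
    · exact absurd h hv
    · exact Q_of_one_le μ ξ (hvmem h).le
  have h2 : IntegrableOn (tailQuantile μ ξ) (Ioc (0:ℝ) 1)ᶜ volume :=
    (integrable_congr hzero.symm).1 (integrable_zero _ _ _)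
  have := (Q_integrableOn μ ξ hmeas hq hint).union h2
  rwa [union_compl_self, integrableOn_univ] at this

section F

variable {q : ℝ} (hq : 1 ≤ q) (hmeas : Measurable ξ)
  (hint : Integrable (fun ω => |ξ ω| ^ q) μ)

lemma F_mono (hmeas : Measurable ξ) {q : ℝ} (hq : 1 ≤ q)
    (hint : Integrable (fun ω => |ξ ω| ^ q) μ) :
    Monotone (quantilePrimitive μ ξ) := by
  intro a b hab
  have hi := (Q_integrable μ ξ hmeas hq hint).intervalIntegrable (a := 0) (b := a)
  have hi2 := (Q_integrable μ ξ hmeas hq hint).intervalIntegrable (a := a) (b := b)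
  have hadd := intervalIntegral.integral_add_adjacent_intervals hi hi2
  have hnn : 0 ≤ ∫ u in a..b, tailQuantile μ ξ u :=
    intervalIntegral.integral_nonneg hab (fun u _ => Q_nonneg μ ξ u)
  show quantilePrimitive μ ξ a ≤ quantilePrimitive μ ξ b
  rw [quantilePrimitive, quantilePrimitive, ← hadd]
  linarith

lemma F_continuous (hmeas : Measurable ξ) {q : ℝ} (hq : 1 ≤ q)
    (hint : Integrable (fun ω => |ξ ω| ^ q) μ) :
    Continuous (quantilePrimitive μ ξ) :=
  intervalIntegral.continuous_primitive
    (fun a b => (Q_integrable μ ξ hmeas hq hint).intervalIntegrable) 0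

lemma F_zero : quantilePrimitive μ ξ 0 = 0 := by
  rw [quantilePrimitive, intervalIntegral.integral_same]

lemma F_of_one_le (hmeas : Measurable ξ) {q : ℝ} (hq : 1 ≤ q)
    (hint : Integrable (fun ω => |ξ ω| ^ q) μ) {x : ℝ} (hx : 1 ≤ x) :
    quantilePrimitive μ ξ x = quantilePrimitive μ ξ 1 := by
  have hi := (Q_integrable μ ξ hmeas hq hint).intervalIntegrable (a := 0) (b := 1)
  have hi2 := (Q_integrable μ ξ hmeas hq hint).intervalIntegrable (a := 1) (b := x)
  have hadd := intervalIntegral.integral_add_adjacent_intervals hi hi2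
  have hzero : (∫ u in (1:ℝ)..x, tailQuantile μ ξ u) = 0 := by
    rw [intervalIntegral.integral_congr (g := fun _ => (0:ℝ)) ?_, intervalIntegral.integral_zero]
    intro v hv
    rw [uIcc_of_le hx] at hv
    exact Q_of_one_le μ ξ hv.1
  rw [quantilePrimitive, quantilePrimitive, ← hadd, hzero, add_zero]

lemma F_le_F_one (hmeas : Measurable ξ) {q : ℝ} (hq : 1 ≤ q)
    (hint : Integrable (fun ω => |ξ ω| ^ q) μ) (x : ℝ) :
    quantilePrimitive μ ξ x ≤ quantilePrimitive μ ξ 1 := by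
  rcases le_total x 1 with h | h
  · exact F_mono μ ξ hmeas hq hint h
  · exact le_of_eq (F_of_one_le μ ξ hmeas hq hint h)

lemma G_nonneg (u : ℝ) : 0 ≤ quantilePrimitiveInv μ ξ u :=
  Real.sInf_nonneg fun _ hx => hx.1

lemma G_of_nonpos {u : ℝ} (hu : u ≤ 0) : quantilePrimitiveInv μ ξ u = 0 := by
  refine le_antisymm (csInf_le ⟨0, fun y hy => hy.1⟩ ⟨le_rfl, ?_⟩) (G_nonneg μ ξ u)
  rw [F_zero]
  exact hu

lemma G_of_gt (hmeas : Measurable ξ) {q : ℝ} (hq : 1 ≤ q)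
    (hint : Integrable (fun ω => |ξ ω| ^ q) μ) {u : ℝ}
    (hu : quantilePrimitive μ ξ 1 < u) : quantilePrimitiveInv μ ξ u = 0 := by
  have : {x : ℝ | 0 ≤ x ∧ u ≤ quantilePrimitive μ ξ x} = ∅ := by
    ext x
    simp only [mem_setOf_eq, mem_empty_iff_false, iff_false, not_and, not_le]
    intro _
    exact lt_of_le_of_lt (F_le_F_one μ ξ hmeas hq hint x) hu
  rw [quantilePrimitiveInv, this, Real.sInf_empty]

lemma G_le_iff (hmeas : Measurable ξ) {q : ℝ} (hq : 1 ≤ q)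
    (hint : Integrable (fun ω => |ξ ω| ^ q) μ) {u x : ℝ}
    (hu : 0 < u) (huL : u ≤ quantilePrimitive μ ξ 1) (hx : 0 ≤ x) :
    quantilePrimitiveInv μ ξ u ≤ x ↔ u ≤ quantilePrimitive μ ξ x := by
  constructor
  · intro h
    have hclosed : IsClosed {y : ℝ | 0 ≤ y ∧ u ≤ quantilePrimitive μ ξ y} := by
      have : {y : ℝ | 0 ≤ y ∧ u ≤ quantilePrimitive μ ξ y}
          = Ici 0 ∩ quantilePrimitive μ ξ ⁻¹' Ici u := rfl
      rw [this]
      exact isClosed_Ici.inter (isClosed_Ici.preimage (F_continuous μ ξ hmeas hq hint))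
    have hne : {y : ℝ | 0 ≤ y ∧ u ≤ quantilePrimitive μ ξ y}.Nonempty := ⟨1, zero_le_one, huL⟩
    have hmem := hclosed.csInf_mem hne ⟨0, fun y hy => hy.1⟩
    exact le_trans hmem.2 (F_mono μ ξ hmeas hq hint h)
  · intro h
    exact csInf_le ⟨0, fun y hy => hy.1⟩ ⟨hx, h⟩

lemma G_measurable (hmeas : Measurable ξ) {q : ℝ} (hq : 1 ≤ q)
    (hint : Integrable (fun ω => |ξ ω| ^ q) μ) :
    Measurable (quantilePrimitiveInv μ ξ) := by
  apply measurable_of_Iic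
  intro x
  rcases lt_or_ge x 0 with hx | hx
  · have : quantilePrimitiveInv μ ξ ⁻¹' Iic x = ∅ := by
      ext u
      simp only [mem_preimage, mem_Iic, mem_empty_iff_false, iff_false, not_le]
      exact lt_of_lt_of_le hx (G_nonneg μ ξ u)
    rw [this]; exact MeasurableSet.empty
  · have : quantilePrimitiveInv μ ξ ⁻¹' Iic x
        = Iic 0 ∪ Ioi (quantilePrimitive μ ξ 1) ∪
          (Ioc 0 (quantilePrimitive μ ξ 1) ∩ Iic (quantilePrimitive μ ξ x)) := by
      ext u
      simp only [mem_preimage, mem_Iic, mem_union, mem_inter_iff, mem_Ioi, mem_Ioc]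
      rcases le_or_gt u 0 with hu | hu
      · simp [G_of_nonpos μ ξ hu, hx, hu]
      · rcases le_or_gt u (quantilePrimitive μ ξ 1) with huL | huL
        · rw [G_le_iff μ ξ hmeas hq hint hu huL hx]
          simp [not_le.2 hu, not_lt.2 huL, hu, huL]
        · simp [G_of_gt μ ξ hmeas hq hint huL, hx, huL, not_le.2 hu]
    rw [this]
    exact ((measurableSet_Iic.union measurableSet_Ioi).union
      (measurableSet_Ioc.inter measurableSet_Iic))

/-- The pushforward of Lebesgue measure on `(0, F 1]` under `G` is `Q · Leb` on `(0,1]`. -/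
lemma map_G (hmeas : Measurable ξ) {q : ℝ} (hq : 1 ≤ q)
    (hint : Integrable (fun ω => |ξ ω| ^ q) μ) :
    (volume.restrict (Ioc (0:ℝ) (quantilePrimitive μ ξ 1))).map (quantilePrimitiveInv μ ξ)
      = (volume.restrict (Ioc (0:ℝ) 1)).withDensity
          (fun v => ENNReal.ofReal (tailQuantile μ ξ v)) := by
  have hGm := G_measurable μ ξ hmeas hq hint
  have hfin : IsFiniteMeasure ((volume.restrict (Ioc (0:ℝ) (quantilePrimitive μ ξ 1))).map
      (quantilePrimitiveInv μ ξ)) := by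
    constructor
    rw [Measure.map_apply hGm MeasurableSet.univ, preimage_univ,
      Measure.restrict_apply MeasurableSet.univ, univ_inter, Real.volume_Ioc]
    simp
  haveI := hfin
  refine Measure.ext_of_Iic _ _ fun x => ?_
  rw [Measure.map_apply hGm measurableSet_Iic,
    Measure.restrict_apply (hGm measurableSet_Iic),
    withDensity_apply _ measurableSet_Iic,
    Measure.restrict_restrict measurableSet_Iic]
  rcases lt_or_ge x 0 with hx | hx
  · have h1 : quantilePrimitiveInv μ ξ ⁻¹' Iic x ∩ Ioc 0 (quantilePrimitive μ ξ 1) = ∅ := by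
      ext u
      simp only [mem_inter_iff, mem_preimage, mem_Iic, mem_Ioc, mem_empty_iff_false, iff_false,
        not_and]
      intro hG
      exact absurd (le_trans (G_nonneg μ ξ u) hG) (not_le.2 hx)
    have h2 : Iic x ∩ Ioc (0:ℝ) 1 = ∅ := by
      ext v
      simp only [mem_inter_iff, mem_Iic, mem_Ioc, mem_empty_iff_false, iff_false, not_and]
      intro hv h0
      exact absurd hv (not_le.2 (by linarith))
    rw [h1, h2, measure_empty, Measure.restrict_empty, lintegral_zero_measure]
  · set c := min 1 x with hc
    have hc0 : 0 ≤ c := le_min zero_le_one hx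
    have hc1 : c ≤ 1 := min_le_left _ _
    have hFc : quantilePrimitive μ ξ 1 ⊓ quantilePrimitive μ ξ x = quantilePrimitive μ ξ c := by
      rcases le_total x 1 with h | h
      · rw [hc, min_eq_right h, min_eq_right (F_mono μ ξ hmeas hq hint h)]
      · rw [hc, min_eq_left h, min_eq_left]
        rw [F_of_one_le μ ξ hmeas hq hint h]
    have hset : quantilePrimitiveInv μ ξ ⁻¹' Iic x ∩ Ioc 0 (quantilePrimitive μ ξ 1)
        = Ioc 0 (quantilePrimitive μ ξ c) := by
      rw [← hFc, ← Ioc_inter_Iic]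
      ext u
      simp only [mem_inter_iff, mem_preimage, mem_Iic, mem_Ioc]
      constructor
      · rintro ⟨hG, hu0, huL⟩
        exact ⟨⟨hu0, huL⟩, (G_le_iff μ ξ hmeas hq hint hu0 huL hx).1 hG⟩
      · rintro ⟨⟨hu0, huL⟩, hux⟩
        exact ⟨(G_le_iff μ ξ hmeas hq hint hu0 huL hx).2 hux, hu0, huL⟩
    have hset2 : Iic x ∩ Ioc (0:ℝ) 1 = Ioc 0 c := by
      rw [inter_comm, Ioc_inter_Iic, hc, inf_comm]
    rw [hset, hset2, Real.volume_Ioc, sub_zero]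
    have hIq : IntegrableOn (tailQuantile μ ξ) (Ioc (0:ℝ) c) volume :=
      (Q_integrableOn μ ξ hmeas hq hint).mono_set (Ioc_subset_Ioc_right hc1)
    have hnn : 0 ≤ᵐ[volume.restrict (Ioc (0:ℝ) c)] tailQuantile μ ξ :=
      ae_of_all _ fun v => Q_nonneg μ ξ v
    rw [← ofReal_integral_eq_lintegral_ofReal hIq hnn]
    congr 1
    rw [quantilePrimitive, intervalIntegral.integral_of_le hc0]

end F

end QCV

/-- **Quantile change-of-variables identity**: if `E|ξ|^q < ∞` for some `q ≥ 1`, then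
`∫₀^{‖ξ‖₁} (Q ∘ G(u))^{q−1} du = ∫₀¹ Q(v)^q dv = E|ξ|^q`, where `Q` is the generalized
inverse of the tail function of `ξ` and `G` the generalized inverse of `x ↦ ∫₀^x Q`. -/
theorem quantile_change_of_variables
    {Ω : Type*} [MeasurableSpace Ω] (μ : Measure Ω) [IsProbabilityMeasure μ]
    (ξ : Ω → ℝ) (q : ℝ) (hq : 1 ≤ q) (hmeas : Measurable ξ)
    (hint : Integrable (fun ω => |ξ ω| ^ q) μ) :
    (∫ u in (0 : ℝ)..(∫ ω, |ξ ω| ∂μ),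
        (tailQuantile μ ξ (quantilePrimitiveInv μ ξ u)) ^ (q - 1)) =
      (∫ v in (0 : ℝ)..1, (tailQuantile μ ξ v) ^ q) ∧
    (∫ v in (0 : ℝ)..1, (tailQuantile μ ξ v) ^ q) = ∫ ω, |ξ ω| ^ q ∂μ := by
  have hQm := QCV.Q_measurable μ ξ hmeas
  have hq0 : (0:ℝ) < q := lt_of_lt_of_le zero_lt_one hq
  have h2 : (∫ v in (0:ℝ)..1, (tailQuantile μ ξ v) ^ q) = ∫ ω, |ξ ω| ^ q ∂μ := by
    rw [intervalIntegral.integral_of_le zero_le_one]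
    exact QCV.integral_comp μ ξ hmeas (f := fun y => y ^ q)
      (Real.continuous_rpow_const hq0.le).measurable
  have hL : (∫ ω, |ξ ω| ∂μ) = quantilePrimitive μ ξ 1 := by
    rw [quantilePrimitive, intervalIntegral.integral_of_le zero_le_one]
    exact (QCV.integral_comp μ ξ hmeas (f := fun y => y) measurable_id).symm
  refine ⟨?_, h2⟩
  rw [hL]
  have hF1 : 0 ≤ quantilePrimitive μ ξ 1 := by
    rw [← QCV.F_zero μ ξ]
    exact QCV.F_mono μ ξ hmeas hq hint zero_le_one
  rw [intervalIntegral.integral_of_le hF1, intervalIntegral.integral_of_le zero_le_one]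
  have hh : Measurable (fun y => tailQuantile μ ξ y ^ (q-1)) :=
    (Real.continuous_rpow_const (by linarith)).measurable.comp hQm
  calc ∫ u in Ioc (0:ℝ) (quantilePrimitive μ ξ 1),
        tailQuantile μ ξ (quantilePrimitiveInv μ ξ u) ^ (q-1)
      = ∫ y, tailQuantile μ ξ y ^ (q-1)
          ∂((volume.restrict (Ioc (0:ℝ) (quantilePrimitive μ ξ 1))).map
            (quantilePrimitiveInv μ ξ)) :=
        (integral_map (QCV.G_measurable μ ξ hmeas hq hint).aemeasurable
          hh.aestronglyMeasurable).symm
    _ = ∫ y, tailQuantile μ ξ y ^ (q-1)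
          ∂((volume.restrict (Ioc (0:ℝ) 1)).withDensity
            (fun v => ENNReal.ofReal (tailQuantile μ ξ v))) := by
        rw [QCV.map_G μ ξ hmeas hq hint]
    _ = ∫ v in Ioc (0:ℝ) 1,
          ((tailQuantile μ ξ v).toNNReal : ℝ≥0) • (tailQuantile μ ξ v ^ (q-1)) :=
        integral_withDensity_eq_integral_smul hQm.real_toNNReal _
    _ = ∫ v in Ioc (0:ℝ) 1, tailQuantile μ ξ v ^ q := by
        congr 1
        funext v
        rw [NNReal.smul_def, Real.coe_toNNReal _ (QCV.Q_nonneg μ ξ v), smul_eq_mul]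
        by_cases h0 : tailQuantile μ ξ v = 0
        · rw [h0, zero_mul, Real.zero_rpow (ne_of_gt hq0)]
        · have hq1 : q - 1 + 1 = q := by ring
          rw [mul_comm, ← Real.rpow_add_one h0 (q-1), hq1]

end
end

section
/- Integral bound for the mixing counting function: Let (τ_k)_{k≥0} be a nonincreasing sequence of nonnegative reals and define H(u) = Σ_{k=0}^∞ 1{2u < τ_k} for u > 0. Then for every s > 0 and every M > 0, ∫₀^M H(u)^s du ≤ (1 ∨ s)/2 · Σ_{k=0}^∞ (k+1)^{s−1} τ_k. In particular, if τ_k ≤ c k^{-a} for all k ≥ 1 with a > s, then ∫₀^M H(u)^s du is bounded by a finite constant depending only on s, a, c, and τ₀. -/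
open MeasureTheory
open scoped ENNReal

noncomputable section

/-- The mixing counting function `H(u) = Σ_{k=0}^∞ 1{2u < τ_k}`. -/
def mixCount (τ : ℕ → ℝ) (u : ℝ) : ENNReal :=
  ∑' k : ℕ, if 2 * u < τ k then 1 else 0

private lemma telescope_sum {s : ℝ} (hs : 0 < s) (n : ℕ) :
    ∑ k ∈ Finset.range n, (((k : ℝ≥0∞) + 1) ^ s - (k : ℝ≥0∞) ^ s) = (n : ℝ≥0∞) ^ s := by
  induction n with
  | zero => simp [ENNReal.zero_rpow_of_pos hs]
  | succ n ih =>
    rw [Finset.sum_range_succ, ih]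
    have hle : (n : ℝ≥0∞) ^ s ≤ ((n : ℝ≥0∞) + 1) ^ s :=
      ENNReal.rpow_le_rpow (le_add_right le_rfl) hs.le
    rw [add_tsub_cancel_of_le hle]
    push_cast
    ring_nf

private lemma natCast_rpow_le_top {s : ℝ} (hs : 0 < s) {x : ℝ≥0∞}
    (h : ∀ n : ℕ, (n : ℝ≥0∞) ^ s ≤ x) : x = ⊤ := by
  rw [eq_top_iff, ← ENNReal.iSup_natCast]
  refine iSup_le fun n => ?_
  set m : ℕ := ⌈1/s⌉₊ + 1 with hm
  have hms : 1 ≤ (m : ℝ) * s := by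
    have h1 : 1/s ≤ (⌈1/s⌉₊ : ℝ) := Nat.le_ceil _
    have h2 : (⌈1/s⌉₊ : ℝ) + 1 = (m : ℝ) := by rw [hm]; push_cast; ring
    nlinarith [div_mul_cancel₀ (1:ℝ) hs.ne']
  rcases Nat.eq_zero_or_pos n with rfl | hn
  · simp
  · have h1 : (1:ℝ≥0∞) ≤ (n:ℝ≥0∞) := by exact_mod_cast hn
    calc (n:ℝ≥0∞) = (n:ℝ≥0∞) ^ (1:ℝ) := (ENNReal.rpow_one _).symm
    _ ≤ (n:ℝ≥0∞) ^ ((m:ℝ) * s) := ENNReal.rpow_le_rpow_of_exponent_le h1 hms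
    _ = ((n ^ m : ℕ) : ℝ≥0∞) ^ s := by
        rw [ENNReal.rpow_mul, ENNReal.rpow_natCast]; push_cast; ring_nf
    _ ≤ x := h _

private lemma pointwise_bound {s : ℝ} (hs : 0 < s) {τ : ℕ → ℝ} (hτ : Antitone τ) (u : ℝ) :
    mixCount τ u ^ s ≤
      ∑' k : ℕ, (((k : ℝ≥0∞) + 1) ^ s - (k : ℝ≥0∞) ^ s) *
        (if 2 * u < τ k then 1 else 0) := by
  by_cases hall : ∀ k, 2 * u < τ k
  · have hR : (∑' k : ℕ, (((k : ℝ≥0∞) + 1) ^ s - (k : ℝ≥0∞) ^ s) *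
        (if 2 * u < τ k then 1 else 0)) = ⊤ := by
      apply natCast_rpow_le_top hs
      intro n
      rw [← telescope_sum hs n]
      refine le_trans (le_of_eq ?_) (ENNReal.sum_le_tsum (Finset.range n))
      exact Finset.sum_congr rfl fun k _ => by rw [if_pos (hall k), mul_one]
    rw [hR]; exact le_top
  · push_neg at hall
    set n₀ : ℕ := Nat.find hall with hn₀
    have hP : ∀ k, (2 * u < τ k ↔ k < n₀) := by
      intro k
      constructor
      · intro hk
        by_contra hlt
        push_neg at hlt
        have := hτ hlt
        have := Nat.find_spec hall
        linarith
      · intro hk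
        exact not_le.1 (Nat.find_min hall hk)
    have hm : mixCount τ u = (n₀ : ℝ≥0∞) := by
      unfold mixCount
      rw [tsum_eq_sum (s := Finset.range n₀)
        (fun k hk => by rw [if_neg]; rw [hP k]; simpa using hk)]
      rw [Finset.sum_congr rfl fun k hk => if_pos ((hP k).2 (Finset.mem_range.1 hk))]
      simp
    have hR : (∑' k : ℕ, (((k : ℝ≥0∞) + 1) ^ s - (k : ℝ≥0∞) ^ s) *
        (if 2 * u < τ k then 1 else 0)) = (n₀ : ℝ≥0∞) ^ s := by
      rw [tsum_eq_sum (s := Finset.range n₀)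
        (fun k hk => by rw [if_neg, mul_zero]; rw [hP k]; simpa using hk)]
      rw [Finset.sum_congr rfl fun k hk => by
        rw [if_pos ((hP k).2 (Finset.mem_range.1 hk)), mul_one]]
      exact telescope_sum hs n₀
    rw [hm, hR]

private lemma real_step {s : ℝ} (hs : 0 < s) (k : ℕ) :
    ((k : ℝ) + 1) ^ s ≤ max 1 s * ((k : ℝ) + 1) ^ (s - 1) + (k : ℝ) ^ s := by
  set x : ℝ := (k : ℝ) with hxdef
  have hx : 0 ≤ x := Nat.cast_nonneg k
  have hx1 : (0:ℝ) < x + 1 := by linarith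
  have hkey : (x + 1) ^ s * ((x+1)⁻¹) = (x + 1) ^ (s - 1) := by
    rw [Real.rpow_sub hx1, Real.rpow_one, div_eq_mul_inv]
  rcases le_or_gt 1 s with h1 | h1
  · rw [max_eq_right h1]
    have hb : 1 + s * (-(1/(x+1))) ≤ (1 + (-(1/(x+1)))) ^ s := by
      apply one_add_mul_self_le_rpow_one_add _ h1
      rw [neg_le, neg_neg]
      rw [div_le_one hx1]; linarith
    have he : 1 + (-(1/(x+1))) = x/(x+1) := by field_simp; ring
    rw [he] at hb
    have hxs : x ^ s = (x+1)^s * (x/(x+1))^s := by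
      rw [← Real.mul_rpow (le_of_lt hx1) (by positivity)]
      congr 1; field_simp
    have h2 : (x+1)^s * (1 + s * (-(1/(x+1)))) ≤ x ^ s := by
      rw [hxs]
      exact mul_le_mul_of_nonneg_left hb (by positivity)
    have h3 : (x+1)^s * (1 + s * (-(1/(x+1)))) =
        (x+1)^s - s * ((x+1)^s * ((x+1)⁻¹)) := by ring_nf
    rw [h3, hkey] at h2
    linarith
  · rw [max_eq_left h1.le]
    have he : (x+1)^s = (x+1)^(s-1) + x * (x+1)^(s-1) := by
      have h := Real.rpow_add hx1 (s-1) 1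
      rw [Real.rpow_one] at h
      have h' : s - 1 + 1 = s := by ring
      rw [h'] at h
      rw [h]; ring
    rw [he, one_mul]
    have hmain : x * (x+1)^(s-1) ≤ x ^ s := by
      rcases eq_or_lt_of_le hx with heq | hx0
      · rw [← heq, Real.zero_rpow hs.ne']; simp
      · calc x * (x+1)^(s-1) ≤ x * x^(s-1) := by
              apply mul_le_mul_of_nonneg_left _ hx
              exact Real.rpow_le_rpow_of_nonpos hx0 (by linarith) (by linarith)
        _ = x ^ s := by
              have h := Real.rpow_add hx0 1 (s-1)
              rw [Real.rpow_one] at h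
              have h' : 1 + (s - 1) = s := by ring
              rw [h'] at h
              rw [h]
    linarith

private lemma g_le {s : ℝ} (hs : 0 < s) (k : ℕ) :
    ((k : ℝ≥0∞) + 1) ^ s - (k : ℝ≥0∞) ^ s ≤
      ENNReal.ofReal (max 1 s * ((k : ℝ) + 1) ^ (s - 1)) := by
  have h1 : ((k : ℝ≥0∞) + 1) = ENNReal.ofReal ((k : ℝ) + 1) := by
    rw [ENNReal.ofReal_add (Nat.cast_nonneg k) zero_le_one]
    simp [ENNReal.ofReal_natCast]
  have h2 : (k : ℝ≥0∞) = ENNReal.ofReal (k : ℝ) := (ENNReal.ofReal_natCast k).symm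
  rw [h1, h2, ENNReal.ofReal_rpow_of_nonneg (by positivity) hs.le,
    ENNReal.ofReal_rpow_of_nonneg (Nat.cast_nonneg k) hs.le]
  rw [tsub_le_iff_right, ← ENNReal.ofReal_add (by positivity) (by positivity)]
  exact ENNReal.ofReal_le_ofReal (real_step hs k)

private lemma part_one {s : ℝ} (hs : 0 < s) (τ : ℕ → ℝ) (hτ : Antitone τ)
    (hτnn : ∀ k, 0 ≤ τ k) (M : ℝ) (hM : 0 < M) :
    (∫⁻ u in Set.Ioc (0 : ℝ) M, (mixCount τ u) ^ s) ≤
      ENNReal.ofReal ((max 1 s) / 2) *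
        ∑' k : ℕ, ENNReal.ofReal (((k : ℝ) + 1) ^ (s - 1) * τ k) := by
  have hmax : (0:ℝ) ≤ max 1 s := le_trans zero_le_one (le_max_left 1 s)
  have hind : ∀ (k : ℕ) (u : ℝ), (if 2 * u < τ k then (1:ℝ≥0∞) else 0) =
      (Set.Iio (τ k / 2)).indicator (fun _ => 1) u := by
    intro k u
    rw [Set.indicator_apply]
    refine if_congr ?_ rfl rfl
    rw [Set.mem_Iio]
    constructor <;> intro <;> linarith
  calc ∫⁻ u in Set.Ioc (0:ℝ) M, mixCount τ u ^ s
      ≤ ∫⁻ u in Set.Ioc (0:ℝ) M, ∑' k : ℕ, (((k : ℝ≥0∞) + 1) ^ s - (k : ℝ≥0∞) ^ s) *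
          (Set.Iio (τ k / 2)).indicator (fun _ => 1) u := by
        apply lintegral_mono
        intro u
        refine le_trans (pointwise_bound hs hτ u) (le_of_eq ?_)
        exact tsum_congr fun k => by rw [hind k u]
    _ = ∑' k : ℕ, ∫⁻ u in Set.Ioc (0:ℝ) M, (((k : ℝ≥0∞) + 1) ^ s - (k : ℝ≥0∞) ^ s) *
          (Set.Iio (τ k / 2)).indicator (fun _ => 1) u :=
        lintegral_tsum fun k =>
          ((measurable_const.indicator measurableSet_Iio).const_mul _).aemeasurable
    _ ≤ ∑' k : ℕ, ENNReal.ofReal (max 1 s * ((k:ℝ)+1)^(s-1)) * ENNReal.ofReal (τ k / 2) := by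
        refine ENNReal.tsum_le_tsum fun k => ?_
        rw [lintegral_const_mul _ (measurable_const.indicator measurableSet_Iio),
          lintegral_indicator_const measurableSet_Iio, one_mul,
          Measure.restrict_apply measurableSet_Iio]
        refine mul_le_mul' (g_le hs k) ?_
        calc volume (Set.Iio (τ k / 2) ∩ Set.Ioc 0 M) ≤ volume (Set.Ioc 0 (τ k / 2)) := by
              apply measure_mono
              rintro u ⟨hu1, hu2, _⟩
              exact ⟨hu2, le_of_lt hu1⟩
        _ = ENNReal.ofReal (τ k / 2) := by rw [Real.volume_Ioc, sub_zero]
    _ = ENNReal.ofReal ((max 1 s)/2) *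
          ∑' k : ℕ, ENNReal.ofReal (((k:ℝ)+1)^(s-1) * τ k) := by
        rw [← ENNReal.tsum_mul_left]
        refine tsum_congr fun k => ?_
        rw [← ENNReal.ofReal_mul (by positivity), ← ENNReal.ofReal_mul (by positivity)]
        congr 1
        ring

private lemma term_bound {s a c τ0 : ℝ} (hs : 0 < s) (hsa : s < a) (hc : 0 ≤ c)
    (hτ0 : 0 ≤ τ0) {τ : ℕ → ℝ} (hτnn : ∀ k, 0 ≤ τ k) (hτ0' : τ 0 ≤ τ0)
    (hτk : ∀ k : ℕ, 1 ≤ k → τ k ≤ c * (k : ℝ) ^ (-a)) (k : ℕ) :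
    ((k : ℝ) + 1) ^ (s - 1) * τ k ≤
      c * max 1 (2 ^ (s - 1)) * (k : ℝ) ^ (s - 1 - a) + (if k = 0 then τ0 else 0) := by
  set B : ℝ := max 1 (2 ^ (s - 1)) with hB
  have hB1 : (1:ℝ) ≤ B := le_max_left _ _
  rcases Nat.eq_zero_or_pos k with rfl | hk
  · simp only [Nat.cast_zero, zero_add, Real.one_rpow, one_mul, reduceIte]
    rw [Real.zero_rpow (by intro h; rw [sub_eq_zero] at h; linarith : s - 1 - a ≠ 0)]
    rw [mul_zero, zero_add]
    linarith
  · have hk0 : (0:ℝ) < (k:ℝ) := by exact_mod_cast hk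
    have hk1 : (1:ℝ) ≤ (k:ℝ) := by exact_mod_cast hk
    rw [if_neg (Nat.pos_iff_ne_zero.1 hk), add_zero]
    have hstep : ((k:ℝ) + 1) ^ (s - 1) ≤ B * (k:ℝ) ^ (s - 1) := by
      rcases le_or_gt 1 s with h1 | h1
      · calc ((k:ℝ) + 1) ^ (s-1) ≤ (2 * (k:ℝ)) ^ (s-1) :=
              Real.rpow_le_rpow (by linarith) (by linarith) (by linarith)
        _ = 2 ^ (s-1) * (k:ℝ) ^ (s-1) := Real.mul_rpow (by norm_num) hk0.le
        _ ≤ B * (k:ℝ) ^ (s-1) := by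
              apply mul_le_mul_of_nonneg_right (le_max_right _ _) (by positivity)
      · calc ((k:ℝ) + 1) ^ (s-1) ≤ (k:ℝ) ^ (s-1) :=
              Real.rpow_le_rpow_of_nonpos hk0 (by linarith) (by linarith)
        _ ≤ B * (k:ℝ) ^ (s-1) := by
              nlinarith [Real.rpow_nonneg hk0.le (s-1)]
    calc ((k:ℝ) + 1) ^ (s - 1) * τ k ≤ (B * (k:ℝ) ^ (s - 1)) * (c * (k:ℝ) ^ (-a)) := by
          apply mul_le_mul hstep (hτk k hk) (hτnn k) (by positivity)
    _ = c * B * (k:ℝ) ^ (s - 1 - a) := by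
          rw [show s - 1 - a = (s - 1) + (-a) by ring, Real.rpow_add hk0]
          ring

/-- **Integral bound for the mixing counting function.**
For a nonincreasing sequence `(τ_k)` of nonnegative reals and
`H(u) = Σ_k 1{2u < τ_k}`, for every `s > 0` and `M > 0`,
`∫₀^M H(u)^s du ≤ (1 ∨ s)/2 · Σ_k (k+1)^{s−1} τ_k`.
In particular, if `τ_k ≤ c k^{-a}` for `k ≥ 1` with `a > s`, the integral is bounded by
a finite constant depending only on `s, a, c` and `τ₀`. -/
theorem mixing_counting_integral_bound (s : ℝ) (hs : 0 < s) :
    (∀ (τ : ℕ → ℝ), Antitone τ → (∀ k, 0 ≤ τ k) →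
      ∀ M : ℝ, 0 < M →
        (∫⁻ u in Set.Ioc (0 : ℝ) M, (mixCount τ u) ^ s) ≤
          ENNReal.ofReal ((max 1 s) / 2) *
            ∑' k : ℕ, ENNReal.ofReal (((k : ℝ) + 1) ^ (s - 1) * τ k)) ∧
    (∀ a c τ0 : ℝ, s < a → 0 ≤ c → 0 ≤ τ0 →
      ∃ K : ℝ, ∀ (τ : ℕ → ℝ), Antitone τ → (∀ k, 0 ≤ τ k) → τ 0 ≤ τ0 →
        (∀ k : ℕ, 1 ≤ k → τ k ≤ c * (k : ℝ) ^ (-a)) →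
        ∀ M : ℝ, 0 < M →
          (∫⁻ u in Set.Ioc (0 : ℝ) M, (mixCount τ u) ^ s) ≤ ENNReal.ofReal K) := by
  constructor
  · exact fun τ hτ hτnn M hM => part_one hs τ hτ hτnn M hM
  · intro a c τ0 hsa hc hτ0
    set B : ℝ := max 1 (2 ^ (s - 1)) with hB
    have hB0 : (0:ℝ) ≤ B := le_trans zero_le_one (le_max_left _ _)
    set g : ℕ → ℝ := fun k => c * B * (k : ℝ) ^ (s - 1 - a) + (if k = 0 then τ0 else 0)
      with hg
    have hg0 : ∀ k, 0 ≤ g k := by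
      intro k
      apply add_nonneg (by positivity)
      split <;> simp [hτ0]
    have hsum : Summable g := by
      apply Summable.add
      · exact (Real.summable_nat_rpow.2 (by linarith)).mul_left (c * B)
      · apply summable_of_ne_finset_zero (s := {0})
        intro k hk
        simp only [Finset.mem_singleton] at hk
        simp [hk]
    have hmax : (0:ℝ) ≤ max 1 s / 2 := by
      have := le_trans zero_le_one (le_max_left 1 s); linarith
    refine ⟨(max 1 s) / 2 * ∑' k, g k, ?_⟩
    intro τ hτ hτnn hτ0' hτk M hM
    calc (∫⁻ u in Set.Ioc (0 : ℝ) M, (mixCount τ u) ^ s)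
        ≤ ENNReal.ofReal ((max 1 s) / 2) *
            ∑' k : ℕ, ENNReal.ofReal (((k : ℝ) + 1) ^ (s - 1) * τ k) :=
          part_one hs τ hτ hτnn M hM
      _ ≤ ENNReal.ofReal ((max 1 s) / 2) * ∑' k : ℕ, ENNReal.ofReal (g k) := by
          refine mul_le_mul_right (ENNReal.tsum_le_tsum fun k => ?_) _
          exact ENNReal.ofReal_le_ofReal (term_bound hs hsa hc hτ0 hτnn hτ0' hτk k)
      _ = ENNReal.ofReal ((max 1 s) / 2) * ENNReal.ofReal (∑' k, g k) := by
          rw [ENNReal.ofReal_tsum_of_nonneg hg0 hsum]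
      _ = ENNReal.ofReal ((max 1 s) / 2 * ∑' k, g k) :=
          (ENNReal.ofReal_mul hmax).symm

end
end

section
/- Weighted quantile inequality for τ-mixing moments: Let ξ be a real random variable with ‖ξ‖_q < ∞ for some q > 2, let Q be the generalized inverse of x ↦ Pr(|ξ| ≥ x), let G be the inverse of x ↦ ∫₀^x Q(u) du, let (τ_k)_{k≥0} be a nonincreasing sequence of nonnegative reals with τ_{k−1} ≤ c k^{-a} for all k ≥ 1, and set H(u) = Σ_{k=0}^∞ 1{2u < τ_k}. Fix r ∈ [2, q) and suppose a is large enough that Σ_{k≥1} k^{(q−1)(r−1)/(q−r) − 1 − a} < ∞. Then ∫₀^{‖ξ‖₁} (H(u) · Q∘G(u))^{r−1} du ≤ C_{q,r,a,c}^{(q−1)/(q−r)} · ‖ξ‖_q^{q(r−1)/(q−1)}, where C_{q,r,a,c} is a finite constant depending only on q, r, a, c. -/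
open MeasureTheory

noncomputable section

section Aux

open Set

variable {Ω : Type} [MeasurableSpace Ω] {μ : Measure Ω} [IsProbabilityMeasure μ]
  {ξ : Ω → ℝ} {q : ℝ}

lemma tailQuantile_nonneg (v : ℝ) : 0 ≤ tailQuantile μ ξ v :=
  Real.sInf_nonneg (fun _ hx => hx.1)

/-- Markov inequality for the tail function. -/
lemma aux_tail_meas (hq : 0 < q) (hξ : Measurable ξ)
    (hmem : MemLp ξ (ENNReal.ofReal q) μ) {x : ℝ} (hx : 0 < x) :
    (μ {ω | x ≤ |ξ ω|}).toReal ≤ ((eLpNorm ξ (ENNReal.ofReal q) μ).toReal / x) ^ q := by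
  set M := (eLpNorm ξ (ENNReal.ofReal q) μ).toReal with hMdef
  have hp0 : (ENNReal.ofReal q) ≠ 0 := by
    simp only [ne_eq, ENNReal.ofReal_eq_zero, not_le]; linarith
  have hpt : (ENNReal.ofReal q) ≠ ⊤ := ENNReal.ofReal_ne_top
  have hpq : (ENNReal.ofReal q).toReal = q := ENNReal.toReal_ofReal hq.le
  have h := mul_meas_ge_le_pow_eLpNorm' μ hp0 hpt hξ.aestronglyMeasurable (ENNReal.ofReal x)
  rw [hpq] at h
  have hset : {ω : Ω | (ENNReal.ofReal x) ≤ ‖ξ ω‖ₑ} = {ω : Ω | x ≤ |ξ ω|} := by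
    ext ω
    simp [Real.enorm_eq_ofReal_abs, ENNReal.ofReal_le_ofReal_iff (abs_nonneg _)]
  rw [hset] at h
  have hS : eLpNorm ξ (ENNReal.ofReal q) μ = ENNReal.ofReal M :=
    (ENNReal.ofReal_toReal hmem.2.ne).symm
  have hMnn : 0 ≤ M := ENNReal.toReal_nonneg
  have hxq : (0:ℝ) < x ^ q := Real.rpow_pos_of_pos hx q
  have hb0 : (ENNReal.ofReal x) ^ q ≠ 0 := by
    rw [ENNReal.ofReal_rpow_of_pos hx]
    simp only [ne_eq, ENNReal.ofReal_eq_zero, not_le]; exact hxq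
  have hbt : (ENNReal.ofReal x) ^ q ≠ ⊤ := by
    rw [ENNReal.ofReal_rpow_of_pos hx]; exact ENNReal.ofReal_ne_top
  have key : μ {ω | x ≤ |ξ ω|} ≤ ENNReal.ofReal ((M / x) ^ q) := by
    have h2 : μ {ω | x ≤ |ξ ω|} ≤
        eLpNorm ξ (ENNReal.ofReal q) μ ^ q / (ENNReal.ofReal x) ^ q := by
      rw [ENNReal.le_div_iff_mul_le (Or.inl hb0) (Or.inl hbt), mul_comm]
      exact h
    calc μ {ω | x ≤ |ξ ω|}
        ≤ eLpNorm ξ (ENNReal.ofReal q) μ ^ q / (ENNReal.ofReal x) ^ q := h2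
      _ = ENNReal.ofReal (M ^ q) / ENNReal.ofReal (x ^ q) := by
          rw [hS, ENNReal.ofReal_rpow_of_nonneg hMnn hq.le, ENNReal.ofReal_rpow_of_pos hx]
      _ = ENNReal.ofReal (M ^ q / x ^ q) := (ENNReal.ofReal_div_of_pos hxq).symm
      _ = ENNReal.ofReal ((M / x) ^ q) := by rw [Real.div_rpow hMnn hx.le]
  exact ENNReal.toReal_le_of_le_ofReal (Real.rpow_nonneg (by positivity) _) key

/-- The Markov bound gives a member of the defining set of the tail quantile. -/
lemma aux_mem_tailSet (hq : 0 < q) (hξ : Measurable ξ)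
    (hmem : MemLp ξ (ENNReal.ofReal q) μ)
    (hM : 0 < (eLpNorm ξ (ENNReal.ofReal q) μ).toReal) {v : ℝ} (hv : 0 < v) :
    (eLpNorm ξ (ENNReal.ofReal q) μ).toReal * v ^ (-(1/q)) ∈
      {x : ℝ | 0 ≤ x ∧ (μ {ω | x ≤ |ξ ω|}).toReal ≤ v} := by
  set M := (eLpNorm ξ (ENNReal.ofReal q) μ).toReal with hMdef
  have hvq : (0:ℝ) < v ^ (1/q) := Real.rpow_pos_of_pos hv _
  have hx : 0 < M * v ^ (-(1/q)) := by
    apply mul_pos hM (Real.rpow_pos_of_pos hv _)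
  refine ⟨hx.le, ?_⟩
  have h1 := aux_tail_meas hq hξ hmem hx
  refine h1.trans_eq ?_
  have h2 : M / (M * v ^ (-(1/q))) = v ^ (1/q) := by
    rw [Real.rpow_neg hv.le]
    field_simp
  rw [h2, ← Real.rpow_mul hv.le, one_div_mul_cancel (by linarith : q ≠ 0), Real.rpow_one]

/-- The quantile is bounded by the Markov bound. -/
lemma aux_tailQuantile_le (hq : 0 < q) (hξ : Measurable ξ)
    (hmem : MemLp ξ (ENNReal.ofReal q) μ)
    (hM : 0 < (eLpNorm ξ (ENNReal.ofReal q) μ).toReal) {v : ℝ} (hv : 0 < v) :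
    tailQuantile μ ξ v ≤ (eLpNorm ξ (ENNReal.ofReal q) μ).toReal * v ^ (-(1/q)) :=
  csInf_le ⟨0, fun _ hx => hx.1⟩ (aux_mem_tailSet hq hξ hmem hM hv)

lemma aux_antitoneOn (hq : 0 < q) (hξ : Measurable ξ)
    (hmem : MemLp ξ (ENNReal.ofReal q) μ)
    (hM : 0 < (eLpNorm ξ (ENNReal.ofReal q) μ).toReal) :
    AntitoneOn (tailQuantile μ ξ) (Ioi (0:ℝ)) := by
  intro v hv v' _ hvv'
  exact csInf_le_csInf ⟨0, fun _ hx => hx.1⟩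
    ⟨_, aux_mem_tailSet hq hξ hmem hM hv⟩
    (fun x hx => ⟨hx.1, hx.2.trans hvv'⟩)

lemma aux_measQ (hq : 0 < q) (hξ : Measurable ξ)
    (hmem : MemLp ξ (ENNReal.ofReal q) μ)
    (hM : 0 < (eLpNorm ξ (ENNReal.ofReal q) μ).toReal) {x : ℝ} :
    AEMeasurable (tailQuantile μ ξ) (volume.restrict (Ioc (0:ℝ) x)) := by
  have h1 : AEMeasurable (tailQuantile μ ξ) (volume.restrict (Ioi (0:ℝ))) :=
    aemeasurable_restrict_of_antitoneOn measurableSet_Ioi (aux_antitoneOn hq hξ hmem hM)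
  exact h1.mono_measure (Measure.restrict_mono Ioc_subset_Ioi_self le_rfl)

lemma aux_int_g (hq : 2 < q) {x : ℝ} (hx : 0 ≤ x) (M : ℝ) :
    IntegrableOn (fun t : ℝ => M * t ^ (-(1/q))) (Ioc (0:ℝ) x) := by
  have h1 : (1:ℝ)/q < 1 := by
    rw [div_lt_one (by linarith)]; linarith
  have h2 : IntervalIntegrable (fun t : ℝ => t ^ (-(1/q))) volume 0 x :=
    intervalIntegral.intervalIntegrable_rpow' (by linarith)
  have h3 := h2.const_mul M
  exact (intervalIntegrable_iff_integrableOn_Ioc_of_le hx).mp h3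

lemma aux_intQ (hq : 2 < q) (hξ : Measurable ξ)
    (hmem : MemLp ξ (ENNReal.ofReal q) μ)
    (hM : 0 < (eLpNorm ξ (ENNReal.ofReal q) μ).toReal) {x : ℝ} (hx : 0 ≤ x) :
    IntegrableOn (tailQuantile μ ξ) (Ioc (0:ℝ) x) := by
  have hq0 : (0:ℝ) < q := by linarith
  apply Integrable.mono' (aux_int_g hq hx _) (aux_measQ hq0 hξ hmem hM).aestronglyMeasurable
  refine (ae_restrict_iff' measurableSet_Ioc).2 (Filter.Eventually.of_forall fun t ht => ?_)
  rw [Real.norm_eq_abs, abs_of_nonneg (tailQuantile_nonneg t)]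
  exact aux_tailQuantile_le hq0 hξ hmem hM ht.1

/-- Bound on the primitive of the quantile. -/
lemma aux_primitive_le (hq : 2 < q) (hξ : Measurable ξ)
    (hmem : MemLp ξ (ENNReal.ofReal q) μ)
    (hM : 0 < (eLpNorm ξ (ENNReal.ofReal q) μ).toReal) {x : ℝ} (hx : 0 ≤ x) :
    quantilePrimitive μ ξ x ≤
      (eLpNorm ξ (ENNReal.ofReal q) μ).toReal * q / (q-1) * x ^ ((q-1)/q) := by
  set M := (eLpNorm ξ (ENNReal.ofReal q) μ).toReal with hMdef
  have hq0 : (0:ℝ) < q := by linarith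
  have hq1 : (0:ℝ) < q - 1 := by linarith
  rcases hx.eq_or_lt with h0 | hxpos
  · rw [quantilePrimitive, ← h0, intervalIntegral.integral_same, Real.zero_rpow, mul_zero]
    positivity
  · have key : quantilePrimitive μ ξ x = ∫ t in Ioc (0:ℝ) x, tailQuantile μ ξ t :=
      intervalIntegral.integral_of_le hx
    rw [key]
    have h1 : ∫ t in Ioc (0:ℝ) x, tailQuantile μ ξ t ≤
        ∫ t in Ioc (0:ℝ) x, M * t ^ (-(1/q)) :=
      setIntegral_mono_on (aux_intQ hq hξ hmem hM hx) (aux_int_g hq hx M)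
        measurableSet_Ioc (fun t ht => aux_tailQuantile_le hq0 hξ hmem hM ht.1)
    refine h1.trans ?_
    have h2 : ∫ t in Ioc (0:ℝ) x, M * t ^ (-(1/q))
        = M * ((x ^ (-(1/q) + 1) - (0:ℝ) ^ (-(1/q) + 1)) / (-(1/q) + 1)) := by
      rw [← intervalIntegral.integral_of_le hx, intervalIntegral.integral_const_mul,
        integral_rpow (Or.inl (by rw [neg_lt_neg_iff, div_lt_one hq0]; linarith))]
    rw [h2]
    have he : -(1/q) + 1 = (q-1)/q := by field_simp; ring
    rw [he, Real.zero_rpow (by positivity)]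
    rw [sub_zero]
    rw [show M * (x ^ ((q-1)/q) / ((q-1)/q)) = M * q / (q-1) * x ^ ((q-1)/q) by
      field_simp]

/-- Key lemma: the primitive at 1 dominates the L¹ norm. -/
lemma aux_primitive_one (hq : 2 < q) (hξ : Measurable ξ)
    (hmem : MemLp ξ (ENNReal.ofReal q) μ)
    (hM : 0 < (eLpNorm ξ (ENNReal.ofReal q) μ).toReal) :
    (∫ ω, |ξ ω| ∂μ) ≤ quantilePrimitive μ ξ 1 := by
  set M := (eLpNorm ξ (ENNReal.ofReal q) μ).toReal with hMdef
  have hq0 : (0:ℝ) < q := by linarith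
  have hQm1 : AEMeasurable (tailQuantile μ ξ) (volume.restrict (Ioc (0:ℝ) 1)) :=
    aux_measQ hq0 hξ hmem hM
  have hL1 : ∫⁻ t in Ioc (0:ℝ) 1, ENNReal.ofReal (tailQuantile μ ξ t)
      = ∫⁻ x in Ioi (0:ℝ), (volume.restrict (Ioc (0:ℝ) 1)) {t | x < tailQuantile μ ξ t} :=
    lintegral_eq_lintegral_meas_lt _
      (Filter.Eventually.of_forall fun t => tailQuantile_nonneg t) hQm1
  have hL2 : ∫⁻ ω, ENNReal.ofReal |ξ ω| ∂μ = ∫⁻ x in Ioi (0:ℝ), μ {ω | x < |ξ ω|} :=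
    lintegral_eq_lintegral_meas_lt μ
      (Filter.Eventually.of_forall fun ω => abs_nonneg _) hξ.abs.aemeasurable
  have hcomp : ∀ x ∈ Ioi (0:ℝ),
      μ {ω | x < |ξ ω|} ≤ (volume.restrict (Ioc (0:ℝ) 1)) {t | x < tailQuantile μ ξ t} := by
    intro x hx
    set m := (μ {ω | x < |ξ ω|}).toReal with hm
    have hm1 : m ≤ 1 := by
      apply ENNReal.toReal_le_of_le_ofReal zero_le_one
      simpa using prob_le_one (μ := μ) (s := {ω | x < |ξ ω|})
    have hsub : Ioo (0:ℝ) m ⊆ {t | x < tailQuantile μ ξ t} ∩ Ioc 0 1 := by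
      intro t ht
      have ht0 : 0 < t := ht.1
      have htm : t < m := ht.2
      refine ⟨?_, ht0, le_trans htm.le hm1⟩
      -- x < Q t
      obtain ⟨n, hn⟩ : ∃ n : ℕ, t < (μ {ω | x + 1/((n:ℝ)+1) ≤ |ξ ω|}).toReal := by
        by_contra hcon
        push_neg at hcon
        have hU : {ω | x < |ξ ω|} = ⋃ n : ℕ, {ω | x + 1/((n:ℝ)+1) ≤ |ξ ω|} := by
          ext ω
          simp only [mem_setOf_eq, mem_iUnion]
          constructor
          · intro h
            obtain ⟨n, hn⟩ := exists_nat_one_div_lt (by linarith : (0:ℝ) < |ξ ω| - x)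
            exact ⟨n, by linarith⟩
          · rintro ⟨n, hn⟩
            have : (0:ℝ) < 1/((n:ℝ)+1) := by positivity
            linarith
        have hmono : Monotone (fun n : ℕ => {ω | x + 1/((n:ℝ)+1) ≤ |ξ ω|}) := by
          intro i j hij ω hω
          simp only [mem_setOf_eq] at *
          have : 1/((j:ℝ)+1) ≤ 1/((i:ℝ)+1) := by
            apply one_div_le_one_div_of_le (by positivity)
            have : (i:ℝ) ≤ j := Nat.cast_le.2 hij
            linarith
          linarith
        have hle : μ {ω | x < |ξ ω|} ≤ ENNReal.ofReal t := by
          rw [hU, hmono.directed_le.measure_iUnion]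
          refine iSup_le fun n => ?_
          rw [← ENNReal.ofReal_toReal (measure_ne_top μ _)]
          exact ENNReal.ofReal_le_ofReal (hcon n)
        have : m ≤ t := by
          rw [hm]
          exact ENNReal.toReal_le_of_le_ofReal ht0.le hle
        linarith
      set y := x + 1/((n:ℝ)+1) with hy
      have hxy : x < y := by
        rw [hy]; have : (0:ℝ) < 1/((n:ℝ)+1) := by positivity
        linarith
      have hQty : y ≤ tailQuantile μ ξ t := by
        apply le_csInf ⟨_, aux_mem_tailSet hq0 hξ hmem hM ht0⟩
        intro z hz
        by_contra hzy
        push_neg at hzy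
        have hsub2 : {ω : Ω | y ≤ |ξ ω|} ⊆ {ω : Ω | z ≤ |ξ ω|} :=
          fun ω hω => le_trans hzy.le hω
        have hmm : (μ {ω | y ≤ |ξ ω|}).toReal ≤ (μ {ω | z ≤ |ξ ω|}).toReal :=
          ENNReal.toReal_mono (measure_ne_top μ _) (measure_mono hsub2)
        have hz2 := hz.2
        linarith
      exact lt_of_lt_of_le hxy hQty
    calc μ {ω | x < |ξ ω|} = ENNReal.ofReal m := (ENNReal.ofReal_toReal (measure_ne_top μ _)).symm
      _ = volume (Ioo (0:ℝ) m) := by rw [Real.volume_Ioo, sub_zero]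
      _ ≤ (volume.restrict (Ioc (0:ℝ) 1)) {t | x < tailQuantile μ ξ t} := by
          rw [Measure.restrict_apply' measurableSet_Ioc]
          exact measure_mono hsub
  have hlint : ∫⁻ ω, ENNReal.ofReal |ξ ω| ∂μ
      ≤ ∫⁻ t in Ioc (0:ℝ) 1, ENNReal.ofReal (tailQuantile μ ξ t) := by
    rw [hL1, hL2]
    exact lintegral_mono_ae ((ae_restrict_iff' measurableSet_Ioi).2
      (Filter.Eventually.of_forall hcomp))
  have hfin : ∫⁻ t in Ioc (0:ℝ) 1, ENNReal.ofReal (tailQuantile μ ξ t) ≠ ⊤ := by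
    have hg : IntegrableOn (fun t : ℝ => M * t ^ (-(1/q))) (Ioc (0:ℝ) 1) :=
      aux_int_g hq zero_le_one M
    have hb : ∫⁻ t in Ioc (0:ℝ) 1, ENNReal.ofReal (tailQuantile μ ξ t)
        ≤ ∫⁻ t in Ioc (0:ℝ) 1, ENNReal.ofReal (M * t ^ (-(1/q))) :=
      lintegral_mono_ae ((ae_restrict_iff' measurableSet_Ioc).2
        (Filter.Eventually.of_forall fun t ht =>
          ENNReal.ofReal_le_ofReal (aux_tailQuantile_le hq0 hξ hmem hM ht.1)))
    have heq := ofReal_integral_eq_lintegral_ofReal hg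
      ((ae_restrict_iff' measurableSet_Ioc).2 (Filter.Eventually.of_forall fun t ht => by
        have : (0:ℝ) < t ^ (-(1/q)) := Real.rpow_pos_of_pos ht.1 _
        positivity))
    exact ne_top_of_le_ne_top (heq ▸ ENNReal.ofReal_ne_top) hb
  have h1 : quantilePrimitive μ ξ 1
      = (∫⁻ t in Ioc (0:ℝ) 1, ENNReal.ofReal (tailQuantile μ ξ t)).toReal := by
    rw [quantilePrimitive, intervalIntegral.integral_of_le zero_le_one,
      integral_eq_lintegral_of_nonneg_ae
        (Filter.Eventually.of_forall fun t => tailQuantile_nonneg t)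
        hQm1.aestronglyMeasurable]
  have h2 : ∫ ω, |ξ ω| ∂μ = (∫⁻ ω, ENNReal.ofReal |ξ ω| ∂μ).toReal :=
    integral_eq_lintegral_of_nonneg_ae
      (Filter.Eventually.of_forall fun ω => abs_nonneg _) hξ.abs.aestronglyMeasurable
  rw [h1, h2]
  exact ENNReal.toReal_mono hfin hlint

/-- Lower bound for `G`. -/
lemma aux_G_lower (hq : 2 < q) (hξ : Measurable ξ)
    (hmem : MemLp ξ (ENNReal.ofReal q) μ)
    (hM : 0 < (eLpNorm ξ (ENNReal.ofReal q) μ).toReal) {u : ℝ}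
    (hu : u ∈ Ioc (0:ℝ) (∫ ω, |ξ ω| ∂μ)) :
    (u / ((eLpNorm ξ (ENNReal.ofReal q) μ).toReal * q / (q-1))) ^ (q/(q-1))
      ≤ quantilePrimitiveInv μ ξ u := by
  set M := (eLpNorm ξ (ENNReal.ofReal q) μ).toReal with hMdef
  have hq0 : (0:ℝ) < q := by linarith
  have hq1 : (0:ℝ) < q - 1 := by linarith
  have hM'' : 0 < M * q / (q-1) := by
    apply div_pos (mul_pos hM hq0) hq1
  have h1mem : (1:ℝ) ∈ {x : ℝ | 0 ≤ x ∧ u ≤ quantilePrimitive μ ξ x} :=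
    ⟨zero_le_one, hu.2.trans (aux_primitive_one hq hξ hmem hM)⟩
  apply le_csInf ⟨1, h1mem⟩
  intro x hx
  have h5 := aux_primitive_le hq hξ hmem hM hx.1
  have h6 : u / (M * q / (q-1)) ≤ x ^ ((q-1)/q) := by
    rw [div_le_iff₀ hM'', mul_comm]
    exact le_trans hx.2 h5
  calc (u / (M * q / (q-1))) ^ (q/(q-1))
      ≤ (x ^ ((q-1)/q)) ^ (q/(q-1)) :=
        Real.rpow_le_rpow (div_nonneg hu.1.le hM''.le) h6 (le_of_lt (div_pos hq0 hq1))
    _ = x := by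
        rw [← Real.rpow_mul hx.1,
          show (q-1)/q * (q/(q-1)) = 1 by field_simp, Real.rpow_one]

end Aux

/-- **Weighted quantile inequality for `τ`-mixing moments.**
For a random variable `ξ` with `‖ξ‖_q < ∞`, `q > 2`, a nonincreasing sequence `(τ_k)`
with `τ_{k−1} ≤ c k^{-a}` and `H(u) = Σ_k 1{2u < τ_k}`, for `r ∈ [2, q)` with
`Σ_{k≥1} k^{(q−1)(r−1)/(q−r) − 1 − a} < ∞`,
`∫₀^{‖ξ‖₁} (H(u) Q∘G(u))^{r−1} du ≤ C^{(q−1)/(q−r)} ‖ξ‖_q^{q(r−1)/(q−1)}`,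
where `C = C_{q,r,a,c}` depends only on `q, r, a, c`. -/
theorem weighted_quantile_inequality (q r a c : ℝ)
    (hq : 2 < q) (hr : 2 ≤ r) (hrq : r < q) (hc : 0 < c)
    (hsum : Summable (fun k : ℕ =>
      ((k : ℝ) + 1) ^ ((q - 1) * (r - 1) / (q - r) - 1 - a))) :
    ∃ C : ℝ, 0 < C ∧
      ∀ (Ω : Type) (_ : MeasurableSpace Ω) (μ : Measure Ω), IsProbabilityMeasure μ →
      ∀ (ξ : Ω → ℝ) (τ : ℕ → ℝ),
        Measurable ξ →
        MemLp ξ (ENNReal.ofReal q) μ →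
        Antitone τ → (∀ k, 0 ≤ τ k) →
        (∀ k : ℕ, 1 ≤ k → τ (k - 1) ≤ c * (k : ℝ) ^ (-a)) →
        (∫⁻ u in Set.Ioc (0 : ℝ) (∫ ω, |ξ ω| ∂μ),
            (mixCount τ u *
              ENNReal.ofReal (tailQuantile μ ξ (quantilePrimitiveInv μ ξ u))) ^
              (r - 1)) ≤
          ENNReal.ofReal (C ^ ((q - 1) / (q - r)) *
            (eLpNorm ξ (ENNReal.ofReal q) μ).toReal ^ (q * (r - 1) / (q - 1))) := by
  classical
  have hq0 : (0:ℝ) < q := by linarith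
  have hq1 : (0:ℝ) < q - 1 := by linarith
  have hr1 : (0:ℝ) < r - 1 := by linarith
  have hqr' : (0:ℝ) < q - r := by linarith
  have hs_pos : 0 < (q-1)*(r-1)/(q-r) := div_pos (mul_pos hq1 hr1) hqr'
  have ha : (q-1)*(r-1)/(q-r) < a := by
    have h1 : Summable (fun n : ℕ => ((n:ℝ)) ^ ((q-1)*(r-1)/(q-r) - 1 - a)) := by
      refine (summable_nat_add_iff
        (f := fun n : ℕ => (n:ℝ) ^ ((q-1)*(r-1)/(q-r) - 1 - a)) 1).1 ?_
      simpa using hsum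
    have h2 := Real.summable_nat_rpow.1 h1
    linarith
  have ha0 : 0 < a := hs_pos.trans ha
  have hβ0 : 0 < 1/a + 1/(q-1) := add_pos (one_div_pos.2 ha0) (one_div_pos.2 hq1)
  set γ := (1/a + 1/(q-1)) * (r-1) with hγ
  have hγ0 : 0 < γ := mul_pos hβ0 hr1
  have hγ1 : γ < 1 := by
    have h1s : 1/((q-1)*(r-1)/(q-r)) = (q-r)/((q-1)*(r-1)) := one_div_div _ _
    have h2 : 1/a < 1/((q-1)*(r-1)/(q-r)) := one_div_lt_one_div_of_lt hs_pos ha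
    have h3 : γ < (1/((q-1)*(r-1)/(q-r)) + 1/(q-1)) * (r-1) := by
      rw [hγ]
      exact mul_lt_mul_of_pos_right (by linarith) hr1
    have h4 : (1/((q-1)*(r-1)/(q-r)) + 1/(q-1)) * (r-1) = 1 := by
      rw [h1s]; field_simp; ring
    linarith
  set E0 := 2 * (c/2)^(1/a) * (q/(q-1))^(1/(q-1)) with hE0
  have hE0pos : 0 < E0 := by
    refine mul_pos (mul_pos two_pos (Real.rpow_pos_of_pos (by linarith) _))
      (Real.rpow_pos_of_pos (div_pos hq0 hq1) _)
  set V := (c/2)^(1-γ)/(1-γ) with hV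
  have hVpos : 0 < V := div_pos (Real.rpow_pos_of_pos (by linarith) _) (by linarith)
  set D := E0^(r-1) * V with hD
  have hDpos : 0 < D := mul_pos (Real.rpow_pos_of_pos hE0pos _) hVpos
  refine ⟨(1+D)^((q-r)/(q-1)), Real.rpow_pos_of_pos (by linarith) _, ?_⟩
  intro Ω mΩ μ hprob ξ τ hξ hmem hτanti hτnn hτbd
  have hCpow : ((1+D)^((q-r)/(q-1))) ^ ((q-1)/(q-r)) = 1 + D := by
    rw [← Real.rpow_mul (by linarith : (0:ℝ) ≤ 1+D),
      show (q-r)/(q-1) * ((q-1)/(q-r)) = 1 by field_simp, Real.rpow_one]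
  set M := (eLpNorm ξ (ENNReal.ofReal q) μ).toReal with hMdef
  rcases (ENNReal.toReal_nonneg : 0 ≤ M).eq_or_lt with hM0 | hM
  · -- degenerate case : `M = 0`, so `ξ = 0` a.e. and the domain of integration is empty
    have hSnorm : eLpNorm ξ (ENNReal.ofReal q) μ = 0 := by
      rcases (ENNReal.toReal_eq_zero_iff _).1 hM0.symm with h | h
      · exact h
      · exact absurd h hmem.2.ne
    have hp0' : (ENNReal.ofReal q) ≠ 0 := by
      simp only [ne_eq, ENNReal.ofReal_eq_zero, not_le]; linarith
    have hξ0 : ξ =ᵐ[μ] 0 :=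
      (eLpNorm_eq_zero_iff hξ.aestronglyMeasurable hp0').1 hSnorm
    have hL0 : ∫ ω, |ξ ω| ∂μ = 0 := by
      have habs : (fun ω => |ξ ω|) =ᵐ[μ] 0 := hξ0.mono fun ω h => by simp [h]
      rw [integral_congr_ae habs]; simp
    rw [hL0, Set.Ioc_self, Measure.restrict_empty, lintegral_zero_measure]
    exact bot_le
  · -- main case
    have hprim1 := aux_primitive_one hq hξ hmem hM
    set M2 := M * q / (q-1) with hM2
    have hM2pos : 0 < M2 := div_pos (mul_pos hM hq0) hq1
    set K := M * M2^(1/(q-1)) with hK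
    have hKpos : 0 < K := mul_pos hM (Real.rpow_pos_of_pos hM2pos _)
    set A1 := 2 * (c/2)^(1/a) with hA1
    have hA1pos : 0 < A1 := mul_pos two_pos (Real.rpow_pos_of_pos (by linarith) _)
    set B := (E0 * M^(q/(q-1)))^(r-1) with hB
    have hBpos : 0 < B :=
      Real.rpow_pos_of_pos (mul_pos hE0pos (Real.rpow_pos_of_pos hM _)) _
    have eKM : A1 * K = E0 * M^(q/(q-1)) := by
      have e3 : M2 = M * (q/(q-1)) := by rw [hM2]; ring
      have e4 : M * M^(1/(q-1)) = M^(q/(q-1)) := by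
        rw [show q/(q-1) = 1 + 1/(q-1) by field_simp; ring, Real.rpow_add hM, Real.rpow_one]
      rw [hK, e3, Real.mul_rpow hM.le (div_pos hq0 hq1).le, hA1, hE0, ← e4]
      ring
    -- pointwise bound on the integrand
    have hpt : ∀ u ∈ Set.Ioc (0:ℝ) (∫ ω, |ξ ω| ∂μ),
        (mixCount τ u *
            ENNReal.ofReal (tailQuantile μ ξ (quantilePrimitiveInv μ ξ u))) ^ (r-1)
          ≤ Set.indicator (Set.Ioc (0:ℝ) (c/2))
              (fun u => ENNReal.ofReal (B * u^(-γ))) u := by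
      intro u hu
      by_cases huc : u ≤ c/2
      · have humem : u ∈ Set.Ioc (0:ℝ) (c/2) := ⟨hu.1, huc⟩
        rw [Set.indicator_of_mem humem]
        -- bound on `Q ∘ G`
        have hGl := aux_G_lower hq hξ hmem hM hu
        have hmu : 0 < (u / M2) ^ (q/(q-1)) :=
          Real.rpow_pos_of_pos (div_pos hu.1 hM2pos) _
        have hQG1 : tailQuantile μ ξ (quantilePrimitiveInv μ ξ u)
            ≤ M * (quantilePrimitiveInv μ ξ u) ^ (-(1/q)) :=
          aux_tailQuantile_le hq0 hξ hmem hM (hmu.trans_le hGl)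
        have hQG2 : tailQuantile μ ξ (quantilePrimitiveInv μ ξ u)
            ≤ K * u ^ (-(1/(q-1))) := by
          refine hQG1.trans ?_
          have h1 : (quantilePrimitiveInv μ ξ u) ^ (-(1/q))
              ≤ ((u/M2)^(q/(q-1)))^(-(1/q)) :=
            Real.rpow_le_rpow_of_nonpos hmu hGl (neg_nonpos.2 (by positivity))
          have e1 : ((u/M2)^(q/(q-1)))^(-(1/q)) = (u/M2)^(-(1/(q-1))) := by
            rw [← Real.rpow_mul (div_nonneg hu.1.le hM2pos.le),
              show q/(q-1) * (-(1/q)) = -(1/(q-1)) by field_simp]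
          have e2 : (u/M2)^(-(1/(q-1))) = u^(-(1/(q-1))) * M2^(1/(q-1)) := by
            rw [Real.div_rpow hu.1.le hM2pos.le, Real.rpow_neg hM2pos.le,
              div_eq_mul_inv, inv_inv]
          calc M * (quantilePrimitiveInv μ ξ u) ^ (-(1/q))
              ≤ M * ((u/M2)^(q/(q-1)))^(-(1/q)) := mul_le_mul_of_nonneg_left h1 hM.le
            _ = K * u^(-(1/(q-1))) := by rw [e1, e2, hK]; ring
        -- bound on `H`
        have hHb : mixCount τ u ≤ ENNReal.ofReal (A1 * u^(-(1/a))) := by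
          have h2u : (0:ℝ) < 2*u := by linarith [hu.1]
          have hcu : (1:ℝ) ≤ c/(2*u) := by
            rw [le_div_iff₀ h2u]; linarith
          set N := (c/(2*u))^(1/a) with hN
          have hN1 : (1:ℝ) ≤ N := Real.one_le_rpow hcu (by positivity)
          have hvanish : ∀ k ∉ Finset.range ⌈N⌉₊,
              (if 2*u < τ k then (1:ENNReal) else 0) = 0 := by
            intro k hk
            rw [if_neg]
            intro hlt
            have hbd := hτbd (k+1) (Nat.le_add_left 1 k)
            have h1 : τ k ≤ c * ((k:ℝ)+1)^(-a) := by
              simpa using hbd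
            have hk' : ⌈N⌉₊ ≤ k := by simpa [Finset.mem_range, not_lt] using hk
            have hkN : N ≤ (k:ℝ) := le_trans (Nat.le_ceil N) (Nat.cast_le.2 hk')
            have hc1 : c/(2*u) < ((k:ℝ)+1)^a := by
              calc c/(2*u) = N^a := by
                    rw [hN, ← Real.rpow_mul (by positivity),
                      one_div_mul_cancel ha0.ne', Real.rpow_one]
                _ ≤ ((k:ℝ))^a :=
                    Real.rpow_le_rpow (by positivity) hkN ha0.le
                _ < ((k:ℝ)+1)^a :=
                    Real.rpow_lt_rpow (k.cast_nonneg) (by linarith) ha0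
            have hka : (0:ℝ) < ((k:ℝ)+1)^a := Real.rpow_pos_of_pos (by positivity) _
            have h3 : 2*u < c * (((k:ℝ)+1)^a)⁻¹ := by
              rw [← Real.rpow_neg (by positivity : (0:ℝ) ≤ (k:ℝ)+1)]
              exact lt_of_lt_of_le hlt h1
            have h2 : ((k:ℝ)+1)^a * (2*u) < c := by
              calc ((k:ℝ)+1)^a * (2*u) < ((k:ℝ)+1)^a * (c * (((k:ℝ)+1)^a)⁻¹) :=
                    mul_lt_mul_of_pos_left h3 hka
                _ = c := by field_simp
            have h4 : ((k:ℝ)+1)^a < c/(2*u) := (lt_div_iff₀ h2u).2 h2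
            linarith
          rw [mixCount, tsum_eq_sum hvanish]
          calc ∑ k ∈ Finset.range ⌈N⌉₊, (if 2*u < τ k then (1:ENNReal) else 0)
              ≤ ∑ _k ∈ Finset.range ⌈N⌉₊, 1 :=
                Finset.sum_le_sum (fun k _ => by split <;> simp)
            _ = (⌈N⌉₊ : ENNReal) := by simp
            _ ≤ ENNReal.ofReal (A1 * u^(-(1/a))) := by
                rw [← ENNReal.ofReal_natCast]
                apply ENNReal.ofReal_le_ofReal
                have hceil : (⌈N⌉₊:ℝ) ≤ N + 1 := (Nat.ceil_lt_add_one (by positivity)).le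
                have h3 : N = (c/2)^(1/a) * u^(-(1/a)) := by
                  rw [hN, show c/(2*u) = (c/2) * u⁻¹ by ring,
                    Real.mul_rpow (by positivity) (inv_nonneg.2 hu.1.le),
                    Real.inv_rpow hu.1.le, ← Real.rpow_neg hu.1.le]
                have h5 : N + 1 ≤ 2 * N := by linarith
                calc (⌈N⌉₊:ℝ) ≤ 2 * N := by linarith
                  _ = A1 * u^(-(1/a)) := by rw [h3, hA1]; ring
        -- combine
        have hprod : (A1 * u^(-(1/a))) * (K * u^(-(1/(q-1))))
            = (E0 * M^(q/(q-1))) * u^(-(1/a + 1/(q-1))) := by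
          rw [← eKM, show -(1/a + 1/(q-1)) = -(1/a) + -(1/(q-1)) by ring,
            Real.rpow_add hu.1]
          ring
        have hupos : (0:ℝ) < u^(-(1/a + 1/(q-1))) := Real.rpow_pos_of_pos hu.1 _
        calc (mixCount τ u *
              ENNReal.ofReal (tailQuantile μ ξ (quantilePrimitiveInv μ ξ u))) ^ (r-1)
            ≤ (ENNReal.ofReal (A1 * u^(-(1/a))) *
                ENNReal.ofReal (K * u^(-(1/(q-1))))) ^ (r-1) :=
              ENNReal.rpow_le_rpow
                (mul_le_mul' hHb (ENNReal.ofReal_le_ofReal hQG2)) hr1.le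
          _ = ENNReal.ofReal (B * u^(-γ)) := by
              rw [← ENNReal.ofReal_mul
                  (mul_pos hA1pos (Real.rpow_pos_of_pos hu.1 _)).le, hprod,
                ENNReal.ofReal_rpow_of_pos
                  (mul_pos (mul_pos hE0pos (Real.rpow_pos_of_pos hM _)) hupos)]
              congr 1
              rw [Real.mul_rpow
                  (mul_pos hE0pos (Real.rpow_pos_of_pos hM _)).le hupos.le,
                ← Real.rpow_mul hu.1.le, hB,
                show -(1/a + 1/(q-1)) * (r-1) = -γ by rw [hγ]; ring]
      · rw [Set.indicator_of_notMem (fun h => huc h.2)]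
        have hτ0c : τ 0 ≤ c := by
          have := hτbd 1 le_rfl
          simpa using this
        have hH0 : mixCount τ u = 0 := by
          rw [mixCount]
          convert tsum_zero with k
          rw [if_neg]
          push_neg at huc
          have h1 : τ k ≤ τ 0 := hτanti (Nat.zero_le k)
          intro hcon
          linarith
        rw [hH0, zero_mul, ENNReal.zero_rpow_of_pos (by linarith : (0:ℝ) < r-1)]
    -- integrate the bound
    have hint : IntegrableOn (fun u : ℝ => B * u^(-γ)) (Set.Ioc (0:ℝ) (c/2)) := by
      have h2 : IntervalIntegrable (fun t : ℝ => t ^ (-γ)) volume 0 (c/2) :=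
        intervalIntegral.intervalIntegrable_rpow' (by linarith)
      exact (intervalIntegrable_iff_integrableOn_Ioc_of_le (by positivity)).mp
        (h2.const_mul B)
    have hae : 0 ≤ᵐ[volume.restrict (Set.Ioc (0:ℝ) (c/2))] (fun u : ℝ => B * u^(-γ)) :=
      (ae_restrict_iff' measurableSet_Ioc).2 (Filter.Eventually.of_forall fun u hu => by
        have h6 : (0:ℝ) < u^(-γ) := Real.rpow_pos_of_pos hu.1 _
        positivity)
    have hval : ∫ u in Set.Ioc (0:ℝ) (c/2), B * u^(-γ) = B * V := by
      rw [← intervalIntegral.integral_of_le (by positivity : (0:ℝ) ≤ c/2),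
        intervalIntegral.integral_const_mul,
        integral_rpow (Or.inl (by linarith : (-1:ℝ) < -γ)),
        Real.zero_rpow (by linarith : (0:ℝ) < -γ + 1).ne', sub_zero, hV,
        show -γ + 1 = 1 - γ by ring]
    have hmain : (∫⁻ u in Set.Ioc (0:ℝ) (∫ ω, |ξ ω| ∂μ),
        (mixCount τ u *
          ENNReal.ofReal (tailQuantile μ ξ (quantilePrimitiveInv μ ξ u))) ^ (r-1))
        ≤ ENNReal.ofReal (B * V) := by
      calc (∫⁻ u in Set.Ioc (0:ℝ) (∫ ω, |ξ ω| ∂μ),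
          (mixCount τ u *
            ENNReal.ofReal (tailQuantile μ ξ (quantilePrimitiveInv μ ξ u))) ^ (r-1))
          ≤ ∫⁻ u in Set.Ioc (0:ℝ) (∫ ω, |ξ ω| ∂μ),
              Set.indicator (Set.Ioc (0:ℝ) (c/2))
                (fun u => ENNReal.ofReal (B * u^(-γ))) u :=
            lintegral_mono_ae ((ae_restrict_iff' measurableSet_Ioc).2
              (Filter.Eventually.of_forall hpt))
        _ ≤ ∫⁻ u, Set.indicator (Set.Ioc (0:ℝ) (c/2))
                (fun u => ENNReal.ofReal (B * u^(-γ))) u :=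
            setLIntegral_le_lintegral _ _
        _ = ∫⁻ u in Set.Ioc (0:ℝ) (c/2), ENNReal.ofReal (B * u^(-γ)) :=
            lintegral_indicator measurableSet_Ioc _
        _ = ENNReal.ofReal (∫ u in Set.Ioc (0:ℝ) (c/2), B * u^(-γ)) :=
            (ofReal_integral_eq_lintegral_ofReal hint hae).symm
        _ = ENNReal.ofReal (B * V) := by rw [hval]
    refine hmain.trans (ENNReal.ofReal_le_ofReal ?_)
    rw [hCpow]
    have hBeq : B = E0^(r-1) * M^(q*(r-1)/(q-1)) := by
      rw [hB, Real.mul_rpow hE0pos.le (Real.rpow_pos_of_pos hM _).le,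
        ← Real.rpow_mul hM.le, show q/(q-1)*(r-1) = q*(r-1)/(q-1) by ring]
    have hMe : (0:ℝ) ≤ M^(q*(r-1)/(q-1)) := (Real.rpow_pos_of_pos hM _).le
    calc B * V = D * M^(q*(r-1)/(q-1)) := by rw [hBeq, hD]; ring
      _ ≤ (1+D) * M^(q*(r-1)/(q-1)) :=
          mul_le_mul_of_nonneg_right (by linarith) hMe

end
end
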